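/- arXiv:1008.0199 — 3 statements merged into one kernel-verified Lean document; each statement's English description precedes it below -/
import Mathlib

section
/- For every s > 1 and every ξ ∈ (0, π], the smaller eigenvalue Λ_ph(ξ) of S(ξ) = M(ξ)⁻¹ R^s(ξ) satisfies 4 sin²(ξ/2) ≤ Λ_ph(ξ) ≤ 6(1 − cos ξ)/(2 + cos ξ). -/
open Real Complex Matrix Filter Topology

/-- Fourier symbol of the SIPG mass matrix (mesh size h = 1). -/
noncomputable def Msym (ξ : ℝ) : Matrix (Fin 2) (Fin 2) ℂ :=
  !![(((2 + Real.cos ξ) / 3 : ℝ) : ℂ), Complex.I * (Real.sin ξ : ℂ) / 6;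
     -Complex.I * (Real.sin ξ : ℂ) / 6, (((2 - Real.cos ξ) / 12 : ℝ) : ℂ)]

/-- Fourier symbol of the SIPG stiffness matrix with penalty parameter s (mesh size h = 1). -/
noncomputable def Rsym (s ξ : ℝ) : Matrix (Fin 2) (Fin 2) ℂ :=
  !![((4 * Real.sin (ξ / 2) ^ 2 : ℝ) : ℂ), 0;
     0, ((s - Real.cos (ξ / 2) ^ 2 : ℝ) : ℂ)]

/-- The matrix S(ξ) = M(ξ)⁻¹ R^s(ξ). -/
noncomputable def Ssym (s ξ : ℝ) : Matrix (Fin 2) (Fin 2) ℂ := (Msym ξ)⁻¹ * Rsym s ξ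

/-- Λ is an eigenvalue of the 2×2 complex matrix S. -/
def IsEigOf (S : Matrix (Fin 2) (Fin 2) ℂ) (Λ : ℂ) : Prop :=
  ∃ v : Fin 2 → ℂ, v ≠ 0 ∧ S.mulVec v = Λ • v

/-- The coefficient B(ξ) of the characteristic quadratic Λ²/12 − B Λ + C = 0. -/
noncomputable def Bcoef (s ξ : ℝ) : ℝ :=
  4 * Real.sin (ξ / 2) ^ 2 * (2 - Real.cos ξ) / 12 +
    (s - Real.cos (ξ / 2) ^ 2) * (2 + Real.cos ξ) / 3

/-- The coefficient C(ξ) of the characteristic quadratic Λ²/12 − B Λ + C = 0. -/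
noncomputable def Ccoef (s ξ : ℝ) : ℝ :=
  4 * Real.sin (ξ / 2) ^ 2 * (s - Real.cos (ξ / 2) ^ 2)

lemma det_Msym (ξ : ℝ) : (Msym ξ).det = 1/12 := by
  have h : (Real.sin ξ : ℂ)^2 + (Real.cos ξ : ℂ)^2 = 1 := by
    exact_mod_cast Real.sin_sq_add_cos_sq ξ
  simp only [Msym, Matrix.det_fin_two_of]
  push_cast [-Complex.ofReal_sin, -Complex.ofReal_cos]
  linear_combination (-1/36 : ℂ) * h + ((Real.sin ξ : ℂ)^2/36) * Complex.I_sq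

lemma det_quad (s ξ Λ : ℝ) :
    (Rsym s ξ - (Λ : ℂ) • Msym ξ).det =
      ((Λ^2/12 - Bcoef s ξ * Λ + Ccoef s ξ : ℝ) : ℂ) := by
  have h : Complex.sin ξ^2 + Complex.cos ξ^2 = 1 := Complex.sin_sq_add_cos_sq ξ
  simp [Rsym, Msym, Bcoef, Ccoef, Matrix.det_fin_two, Matrix.sub_apply,
    Complex.ofReal_sin, Complex.ofReal_cos]
  linear_combination (-(Λ : ℂ)^2/36) * h + ((Λ : ℂ)^2 * (Complex.sin ξ)^2/36) * Complex.I_sq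

lemma eig_quad (s ξ Λ : ℝ) :
    IsEigOf (Ssym s ξ) (Λ : ℂ) ↔ Λ^2/12 - Bcoef s ξ * Λ + Ccoef s ξ = 0 := by
  have hM : IsUnit (Msym ξ).det := by
    rw [det_Msym]; exact isUnit_iff_ne_zero.mpr (by norm_num)
  have hMM : Msym ξ * (Msym ξ)⁻¹ = 1 := Matrix.mul_nonsing_inv _ hM
  have hMM' : (Msym ξ)⁻¹ * Msym ξ = 1 := Matrix.nonsing_inv_mul _ hM
  have key : ∀ v : Fin 2 → ℂ, (Ssym s ξ).mulVec v = (Λ : ℂ) • v ↔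
      (Rsym s ξ - (Λ : ℂ) • Msym ξ).mulVec v = 0 := by
    intro v
    rw [Matrix.sub_mulVec, Matrix.smul_mulVec, sub_eq_zero]
    constructor
    · intro hEq
      have := congrArg ((Msym ξ).mulVec) hEq
      rwa [Ssym, Matrix.mulVec_mulVec, ← mul_assoc, hMM, one_mul,
        Matrix.mulVec_smul] at this
    · intro hEq
      rw [Ssym, ← Matrix.mulVec_mulVec, hEq, Matrix.mulVec_smul,
        Matrix.mulVec_mulVec, hMM', Matrix.one_mulVec]
  constructor
  · rintro ⟨v, hv, hEq⟩
    have hdet : (Rsym s ξ - (Λ : ℂ) • Msym ξ).det = 0 :=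
      Matrix.exists_mulVec_eq_zero_iff.mp ⟨v, hv, (key v).mp hEq⟩
    rw [det_quad] at hdet
    exact_mod_cast hdet
  · intro hq
    have hdet : (Rsym s ξ - (Λ : ℂ) • Msym ξ).det = 0 := by
      rw [det_quad]; exact_mod_cast hq
    obtain ⟨v, hv, hEq⟩ := Matrix.exists_mulVec_eq_zero_iff.mpr hdet
    exact ⟨v, hv, (key v).mpr hEq⟩

lemma aux_lower {z x y : ℝ} (h : (z - x)^2 ≤ (z - y)^2) (hx : x ≤ z) (hy : y ≤ z) :
    y ≤ x := by nlinarith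

lemma aux_upper {m x u : ℝ} (h : (u - m)^2 ≤ (m - x)^2) (hx : x ≤ m) : x ≤ u := by nlinarith

theorem Ssym_physical_eigenvalue_bounds (s ξ : ℝ) (hs : 1 < s)
    (hξ : ξ ∈ Set.Ioc 0 Real.pi) (Λph : ℝ)
    (hph : IsEigOf (Ssym s ξ) (Λph : ℂ) ∧
      ∀ μ : ℝ, IsEigOf (Ssym s ξ) (μ : ℂ) → Λph ≤ μ) :
    4 * Real.sin (ξ / 2) ^ 2 ≤ Λph ∧
      Λph ≤ 6 * (1 - Real.cos ξ) / (2 + Real.cos ξ) := by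
  obtain ⟨heig, hmin⟩ := hph
  obtain ⟨hξ0, hξπ⟩ := hξ
  have hroot : Λph^2/12 - Bcoef s ξ*Λph + Ccoef s ξ = 0 := (eig_quad s ξ Λph).mp heig
  have hmin' : ∀ x : ℝ, x^2/12 - Bcoef s ξ*x + Ccoef s ξ = 0 → Λph ≤ x :=
    fun x hx => hmin x ((eig_quad s ξ x).mpr hx)
  clear heig hmin
  have hc1 : Real.cos ξ < 1 := by
    have := Real.cos_lt_cos_of_nonneg_of_le_pi (le_refl 0) hξπ hξ0
    simpa using this
  have hc2 : -1 ≤ Real.cos ξ := Real.neg_one_le_cos ξ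
  have hsin : Real.sin (ξ/2)^2 = (1 - Real.cos ξ)/2 := by
    have h := Real.cos_sq (ξ/2)
    rw [show 2*(ξ/2) = ξ by ring] at h
    nlinarith [Real.sin_sq_add_cos_sq (ξ/2)]
  have hcos : Real.cos (ξ/2)^2 = (1 + Real.cos ξ)/2 := by
    have h := Real.cos_sq (ξ/2)
    rw [show 2*(ξ/2) = ξ by ring] at h
    linarith
  have hBv : Bcoef s ξ
      = 2*(1-Real.cos ξ)*(2-Real.cos ξ)/12 + (s-(1+Real.cos ξ)/2)*(2+Real.cos ξ)/3 := by
    rw [Bcoef, hsin, hcos]; ring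
  have hCv : Ccoef s ξ = 2*(1-Real.cos ξ)*(s-(1+Real.cos ξ)/2) := by
    rw [Ccoef, hsin, hcos]; ring
  rw [hsin]
  rw [hBv, hCv] at hroot hmin'
  obtain ⟨c, hcdef⟩ : ∃ c, Real.cos ξ = c := ⟨_, rfl⟩
  rw [hcdef] at hroot hmin' hc1 hc2 ⊢
  obtain ⟨B, hB⟩ : ∃ b, 2*(1-c)*(2-c)/12 + (s-(1+c)/2)*(2+c)/3 = b := ⟨_, rfl⟩
  obtain ⟨C, hC⟩ : ∃ cc, 2*(1-c)*(s-(1+c)/2) = cc := ⟨_, rfl⟩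
  rw [hB, hC] at hroot hmin'
  -- discriminant is a perfect square
  have hΔ : 36*B^2 - 12*C = (6*B - Λph)^2 := by linear_combination (-12 : ℝ)*hroot
  obtain ⟨r, hrdef⟩ : ∃ r, Real.sqrt (36*B^2 - 12*C) = r := ⟨_, rfl⟩
  have hr0 : 0 ≤ r := hrdef ▸ Real.sqrt_nonneg _
  have hr2 : r^2 = (6*B - Λph)^2 := by
    rw [← hrdef, hΔ]; exact Real.sq_sqrt (sq_nonneg _)
  have hmroot : (6*B - r)^2/12 - B*(6*B - r) + C = 0 := by
    linear_combination (1/12 : ℝ)*hr2 - (1/12 : ℝ)*hΔ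
  have hle : Λph ≤ 6*B - r := hmin' _ hmroot
  have hΛB : Λph ≤ 6*B := by linarith
  constructor
  · -- lower bound: 2(1-c) ≤ Λph
    have hqa0 : (0:ℝ) ≤ 2*(1-c)^2*(s-1)/3 := by nlinarith [sq_nonneg (1-c)]
    have ha6B : 2*(1-c) ≤ 6*B := by
      rw [← hB]
      nlinarith [mul_nonneg (by linarith : (0:ℝ) ≤ s-1) (by linarith : (0:ℝ) ≤ 2+c),
        mul_nonneg (by linarith : (0:ℝ) ≤ 1-c) (by linarith : (0:ℝ) ≤ 2+c)]
    have hsq : (6*B - Λph)^2 ≤ (6*B - 2*(1-c))^2 := by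
      have e : (6*B - 2*(1-c))^2 - (6*B - Λph)^2 = 12*(2*(1-c)^2*(s-1)/3) := by
        linear_combination (-12 : ℝ)*hroot + (24*(1-c))*hB + (-12 : ℝ)*hC
      linarith
    have := aux_lower hsq hΛB ha6B
    linarith
  · -- upper bound
    have h2c : (0:ℝ) < 2 + c := by linarith
    rw [div_eq_mul_inv, ← div_eq_mul_inv, le_div_iff₀ h2c]
    have key : (6*(1-c) - 6*B*(2+c))^2 - ((6*B - Λph)*(2+c))^2 = -12*(1-c)^3*(1+c) := by
      have hqU : 36*(1-c)^2 - 72*B*(1-c)*(2+c) + 12*C*(2+c)^2 = -12*(1-c)^3*(1+c) := by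
        rw [← hB, ← hC]; ring
      linear_combination hqU - (2+c)^2 * hΔ - 24*(2+c)^2 * hroot
    have hpos : (0:ℝ) ≤ 12*(1-c)^3*(1+c) := by
      have h1 : (0:ℝ) ≤ (1-c)^3 := pow_nonneg (by linarith) 3
      have h2 : (0:ℝ) ≤ 1+c := by linarith
      positivity
    have hkey0 : (6*(1-c) - 6*B*(2+c))^2 ≤ (6*B*(2+c) - Λph*(2+c))^2 := by
      have : ((6*B - Λph)*(2+c))^2 = (6*B*(2+c) - Λph*(2+c))^2 := by ring
      linarith [key, this ▸ key]
    have hx : Λph*(2+c) ≤ 6*B*(2+c) := mul_le_mul_of_nonneg_right hΛB h2c.le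
    exact aux_upper hkey0 hx
end

section
/- Fix ξ ∈ (0, π]. As s → ∞, the smaller eigenvalue Λ_ph^s(ξ) of S^s(ξ) = M(ξ)⁻¹ R^s(ξ) converges to 6(1 − cos ξ)/(2 + cos ξ), the square of the dispersion relation of the P1 classical (continuous) finite element semi-discretization. -/
open Real Complex Matrix Filter Topology

lemma detM (ξ : ℝ) : (Msym ξ).det = (1/12 : ℂ) := by
  have h : Complex.sin ξ ^2 + Complex.cos ξ ^2 = 1 := Complex.sin_sq_add_cos_sq ξ
  simp [Msym, Matrix.det_fin_two_of]
  push_cast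
  linear_combination (Complex.sin ξ^2/36) * Complex.I_sq - (1/36) * h

lemma detRM (s ξ μ : ℝ) : (Rsym s ξ - (μ:ℂ) • Msym ξ).det =
      ((μ^2/12 - Bcoef s ξ * μ + Ccoef s ξ : ℝ) : ℂ) := by
  have h : Complex.sin ξ ^2 + Complex.cos ξ ^2 = 1 := Complex.sin_sq_add_cos_sq ξ
  simp [Rsym, Msym, Matrix.det_fin_two_of, Bcoef, Ccoef, Matrix.smul_apply]
  push_cast
  ring_nf
  linear_combination ((μ:ℂ)^2 * Complex.sin ξ^2/36) * Complex.I_sq - ((μ:ℂ)^2/36) * h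

lemma eig_iff (s ξ : ℝ) (μ : ℝ) :
    IsEigOf (Ssym s ξ) (μ:ℂ) ↔ μ^2/12 - Bcoef s ξ * μ + Ccoef s ξ = 0 := by
  have hdM := detM ξ
  have hM : IsUnit (Msym ξ).det := by rw [hdM]; exact isUnit_iff_ne_zero.mpr (by norm_num)
  have key : Ssym s ξ - (μ:ℂ) • 1 = (Msym ξ)⁻¹ * (Rsym s ξ - (μ:ℂ) • Msym ξ) := by
    rw [Matrix.mul_sub, Matrix.mul_smul, Matrix.nonsing_inv_mul _ hM, Ssym]
  have hiff : ∀ v : Fin 2 → ℂ, ((Ssym s ξ).mulVec v = (μ:ℂ) • v ↔ (Ssym s ξ - (μ:ℂ) • 1).mulVec v = 0) := by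
    intro v
    rw [Matrix.sub_mulVec, Matrix.smul_mulVec, Matrix.one_mulVec, sub_eq_zero]
  have hdet0 : (Ssym s ξ - (μ:ℂ) • 1).det = 0 ↔ μ^2/12 - Bcoef s ξ * μ + Ccoef s ξ = 0 := by
    rw [key, Matrix.det_mul, Matrix.det_nonsing_inv, hdM, detRM]
    rw [mul_eq_zero]
    constructor
    · rintro (h | h)
      · exfalso
        rw [Ring.inverse_eq_inv'] at h
        norm_num at h
      · exact_mod_cast h
    · intro h
      right
      exact_mod_cast h
  constructor
  · rintro ⟨v, hv, hvec⟩
    exact hdet0.mp (Matrix.exists_mulVec_eq_zero_iff.mp ⟨v, hv, (hiff v).mp hvec⟩)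
  · intro h
    obtain ⟨v, hv, h0⟩ := Matrix.exists_mulVec_eq_zero_iff.mpr (hdet0.mpr h)
    exact ⟨v, hv, (hiff v).mpr h0⟩

lemma Dnonneg (s ξ : ℝ) (hs : 1 < s) :
    0 ≤ Bcoef s ξ ^ 2 - Ccoef s ξ / 3 := by
  have ha : 0 ≤ 4 * Real.sin (ξ/2)^2 := by positivity
  have hpy : Real.sin (ξ/2)^2 + Real.cos (ξ/2)^2 = 1 := Real.sin_sq_add_cos_sq (ξ/2)
  have hd : 0 < s - Real.cos (ξ/2)^2 := by nlinarith [sq_nonneg (Real.sin (ξ/2))]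
  have hc2 : Real.cos ξ ^2 ≤ 1 := by nlinarith [Real.sin_sq_add_cos_sq ξ, sq_nonneg (Real.sin ξ)]
  rw [Bcoef, Ccoef]
  nlinarith [sq_nonneg (4 * Real.sin (ξ/2)^2 * (2 - Real.cos ξ)/12 - (s - Real.cos (ξ/2)^2) * (2 + Real.cos ξ)/3),
    mul_nonneg ha hd.le]

lemma roots_iff (s ξ μ : ℝ) (hD : 0 ≤ Bcoef s ξ ^ 2 - Ccoef s ξ / 3) :
    μ^2/12 - Bcoef s ξ * μ + Ccoef s ξ = 0 ↔
      μ = 6 * Bcoef s ξ - 6 * Real.sqrt (Bcoef s ξ ^ 2 - Ccoef s ξ / 3) ∨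
      μ = 6 * Bcoef s ξ + 6 * Real.sqrt (Bcoef s ξ ^ 2 - Ccoef s ξ / 3) := by
  have hsq := Real.sq_sqrt hD
  set B := Bcoef s ξ; set C := Ccoef s ξ; set r := Real.sqrt (B^2 - C/3)
  have factored : μ^2/12 - B * μ + C = (1/12) * ((μ - (6*B - 6*r)) * (μ - (6*B + 6*r))) := by
    linear_combination (3 : ℝ) * hsq
  rw [factored]
  constructor
  · intro h
    rcases mul_eq_zero.mp h with h | h
    · norm_num at h
    · rcases mul_eq_zero.mp h with h | h
      · left; linarith [sub_eq_zero.mp h]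
      · right; linarith [sub_eq_zero.mp h]
  · rintro (h | h) <;> rw [h] <;> ring

lemma phi_cont (a k p q : ℝ) (hp : 0 < p) :
    ContinuousAt (fun t : ℝ => (12*a - 12*a*k*t) /
      (6*(p + q*t) + 6*Real.sqrt ((p+q*t)^2 - ((a/3)*t - (a*k/3)*t^2)))) 0 := by
  apply ContinuousAt.div
  · fun_prop
  · fun_prop
  · simp
    positivity

set_option maxHeartbeats 1000000 in
theorem Ssym_physical_eigenvalue_tendsto_FEM (ξ : ℝ) (hξ : ξ ∈ Set.Ioc 0 Real.pi)
    (Λph : ℝ → ℝ)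
    (hph : ∀ s : ℝ, 1 < s → IsEigOf (Ssym s ξ) ((Λph s : ℝ) : ℂ) ∧
      ∀ μ : ℝ, IsEigOf (Ssym s ξ) (μ : ℂ) → Λph s ≤ μ) :
    Filter.Tendsto Λph Filter.atTop
      (nhds (6 * (1 - Real.cos ξ) / (2 + Real.cos ξ))) := by
  obtain ⟨hξ0, hξπ⟩ := hξ
  set c := Real.cos ξ with hc'
  set a := 4 * Real.sin (ξ/2)^2 with ha'
  set k := Real.cos (ξ/2)^2 with hk'
  set p := (2 + c)/3 with hp'
  set q := a*(2-c)/12 - k*(2+c)/3 with hq'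
  have hcge : -1 ≤ c := Real.neg_one_le_cos ξ
  have hcle : c ≤ 1 := Real.cos_le_one ξ
  have hp : 0 < p := by rw [hp']; linarith
  have hsinhalf : Real.sin (ξ/2)^2 = 1/2 - c/2 := by
    have h := Real.cos_sq (ξ/2)
    rw [show 2*(ξ/2) = ξ by ring] at h
    have h2 := Real.sin_sq_add_cos_sq (ξ/2)
    rw [hc']; linarith
  have ha : 0 < a := by
    rw [ha']
    have : 0 < Real.sin (ξ/2) := Real.sin_pos_of_pos_of_lt_pi (by linarith) (by linarith [Real.pi_pos])
    positivity
  have hk01 : 0 ≤ k := sq_nonneg _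
  set g : ℝ → ℝ := fun s => 6 * Bcoef s ξ - 6 * Real.sqrt (Bcoef s ξ ^ 2 - Ccoef s ξ / 3) with hg'
  set φ : ℝ → ℝ := fun t => (12*a - 12*a*k*t) /
      (6*(p + q*t) + 6*Real.sqrt ((p+q*t)^2 - ((a/3)*t - (a*k/3)*t^2))) with hφ'
  have hfacts : ∀ s : ℝ, 1 < s → 0 < Bcoef s ξ ∧ Bcoef s ξ = s * p + q ∧
      Ccoef s ξ = a * (s - k) := by
    intro s hs
    have hkle : k ≤ 1 := by
      rw [hk']; nlinarith [Real.sin_sq_add_cos_sq (ξ/2), sq_nonneg (Real.sin (ξ/2))]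
    have hdpos : 0 < s - k := by linarith
    refine ⟨?_, ?_, rfl⟩
    · have hBdef : Bcoef s ξ = a * (2 - c)/12 + (s - k)*(2+c)/3 := rfl
      rw [hBdef]
      nlinarith [mul_pos hdpos (show (0:ℝ) < 2+c by linarith),
        mul_nonneg ha.le (show (0:ℝ) ≤ 2-c by linarith)]
    · show a * (2 - c)/12 + (s - k)*(2+c)/3 = s * p + q
      rw [hp', hq']; ring
  have heq : ∀ s : ℝ, 1 < s → Λph s = g s := by
    intro s hs
    have hD := Dnonneg s ξ hs
    obtain ⟨h1, h2⟩ := hph s hs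
    have hroot := (roots_iff s ξ _ hD).mp ((eig_iff s ξ _).mp h1)
    have hminus : IsEigOf (Ssym s ξ) ((g s : ℝ) : ℂ) := by
      apply (eig_iff s ξ _).mpr
      apply (roots_iff s ξ _ hD).mpr
      left; rfl
    have hle : Λph s ≤ g s := h2 _ hminus
    have hs0 : 0 ≤ Real.sqrt (Bcoef s ξ ^ 2 - Ccoef s ξ / 3) := Real.sqrt_nonneg _
    rcases hroot with h | h
    · exact h
    · have hgle : g s ≤ Λph s := by
        rw [h]
        show 6 * Bcoef s ξ - 6 * Real.sqrt (Bcoef s ξ ^ 2 - Ccoef s ξ / 3) ≤ _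
        linarith
      linarith
  have heq2 : ∀ s : ℝ, 1 < s → g s = φ s⁻¹ := by
    intro s hs
    have hspos : (0:ℝ) < s := by linarith
    have hD := Dnonneg s ξ hs
    obtain ⟨hB, hBeq, hCeq⟩ := hfacts s hs
    have hsq := Real.sq_sqrt hD
    set r := Real.sqrt (Bcoef s ξ ^ 2 - Ccoef s ξ / 3) with hr'
    have hr0 : 0 ≤ r := Real.sqrt_nonneg _
    have hden : 0 < 6 * Bcoef s ξ + 6 * r := by linarith
    have harg : (p + q*s⁻¹)^2 - ((a/3)*s⁻¹ - (a*k/3)*(s⁻¹)^2)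
        = (Bcoef s ξ ^ 2 - Ccoef s ξ / 3) / s^2 := by
      rw [hCeq, hBeq]
      field_simp
    have hsqrt : Real.sqrt ((p + q*s⁻¹)^2 - ((a/3)*s⁻¹ - (a*k/3)*(s⁻¹)^2)) = r / s := by
      rw [harg, Real.sqrt_div hD, Real.sqrt_sq hspos.le, hr']
    have hgoal : g s = 12 * Ccoef s ξ / (6 * Bcoef s ξ + 6 * r) := by
      rw [eq_div_iff hden.ne']
      show (6 * Bcoef s ξ - 6 * r) * _ = _
      linear_combination (-36 : ℝ) * hsq
    have hnum : 12*a - 12*a*k*s⁻¹ = 12 * Ccoef s ξ / s := by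
      rw [hCeq]; field_simp
    have hden2 : 6*(p + q*s⁻¹) + 6*(r/s) = (6 * Bcoef s ξ + 6*r)/s := by
      rw [hBeq]; field_simp
    have hφval : φ s⁻¹ = (12 * Ccoef s ξ / s) / ((6 * Bcoef s ξ + 6*r)/s) := by
      rw [hφ']
      simp only [hsqrt]
      rw [hnum, hden2]
    rw [hφval, div_div_div_comm, div_self hspos.ne', div_one, hgoal]
  have hlim : Filter.Tendsto (fun s : ℝ => φ s⁻¹) Filter.atTop (nhds (φ 0)) :=
    (phi_cont a k p q hp).tendsto.comp tendsto_inv_atTop_zero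
  have hφ0 : φ 0 = 6 * (1 - c) / (2 + c) := by
    rw [hφ']
    simp only [mul_zero, sub_zero, add_zero, zero_pow, ne_eq, OfNat.ofNat_ne_zero,
      not_false_eq_true, zero_mul]
    rw [Real.sqrt_sq hp.le]
    rw [ha', hsinhalf, hp']
    have h2c : (0:ℝ) < 2 + c := by linarith
    field_simp
    ring
  have hgt : Filter.Tendsto g Filter.atTop (nhds (6 * (1 - c) / (2 + c))) := by
    rw [← hφ0]
    apply hlim.congr'
    filter_upwards [eventually_gt_atTop (1:ℝ)] with s hs
    exact (heq2 s hs).symm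
  apply hgt.congr'
  filter_upwards [eventually_gt_atTop (1:ℝ)] with s hs
  exact (heq s hs).symm
end

section
/- For s = 3 the two roots of the quadratic Λ²/12 − B(ξ)Λ + C(ξ) = 0 with B(ξ) = 4 sin²(ξ/2)(2−cos ξ)/12 + (3 − cos²(ξ/2))(2+cos ξ)/3 and C(ξ) = 4 sin²(ξ/2)(3 − cos²(ξ/2)) coincide at ξ = π, both equal to 12, i.e. the discriminant B(π)² − (4/12)·C(π) = 0. -/
open Real Complex Matrix Filter Topology

theorem degeneracy_at_pi_for_s_eq_three :
    Bcoef 3 Real.pi ^ 2 - (4 / 12) * Ccoef 3 Real.pi = 0 ∧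
    ∀ Λ : ℝ, Λ ^ 2 / 12 - Bcoef 3 Real.pi * Λ + Ccoef 3 Real.pi = 0 ↔ Λ = 12 := by
  have hB : Bcoef 3 Real.pi = 2 := by
    simp [Bcoef, Real.sin_pi_div_two, Real.cos_pi_div_two, Real.cos_pi]
    norm_num
  have hC : Ccoef 3 Real.pi = 12 := by
    simp [Ccoef, Real.sin_pi_div_two, Real.cos_pi_div_two]
    norm_num
  rw [hB, hC]
  constructor
  · norm_num
  · intro Λ
    constructor
    · intro h; nlinarith [sq_nonneg (Λ - 12)]
    · rintro rfl; norm_num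
end
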